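/- Let A be a parallel composition of LTSs with interface Aᵢ, and let S be any LTS over the alphabet Σᵢ. Then for every environment E (an LTS with Σ_E ∩ (Σ₁ ∪ … ∪ Σₙ) = Σ_E ∩ Σᵢ) the projections onto Σ_E of the traces of E ∥ A and of E ∥ S coincide, if and only if Tr(S) = Tr(A)|_{Σᵢ}. -/

import Mathlib

structure LTS (α S : Type) where
  init : S
  step : S → α → S → Prop

inductive Exec {α S : Type} (step : S → α → S → Prop) : S → List α → S → Prop
  | nil (s : S) : Exec step s [] s
  | cons {s s' s'' : S} {a : α} {w : List α} :
      step s a s' → Exec step s' w s'' → Exec step s (a :: w) s''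

def LTS.Tr {α S : Type} (L : LTS α S) (w : List α) : Prop :=
  ∃ s, Exec L.step L.init w s

def parStep {α ι : Type} {S : ι → Type} (alph : ι → α → Bool) (A : ∀ i, LTS α (S i)) :
    (∀ i, S i) → α → (∀ i, S i) → Prop := fun s a s' =>
  ∀ i, (alph i a = true → (A i).step (s i) a (s' i)) ∧ (alph i a = false → s' i = s i)

def par {α ι : Type} {S : ι → Type} (alph : ι → α → Bool) (A : ∀ i, LTS α (S i)) :
    LTS α (∀ i, S i) :=
  ⟨fun i => (A i).init, parStep alph A⟩

/-- Binary parallel composition of two LTSs with alphabets `aA`, `aB`. -/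
def par2 {α SA SB : Type} (aA aB : α → Bool) (LA : LTS α SA) (LB : LTS α SB) :
    LTS α (SA × SB) where
  init := (LA.init, LB.init)
  step := fun s a s' =>
    (aA a = true → LA.step s.1 a s'.1) ∧ (aA a = false → s'.1 = s.1) ∧
    (aB a = true → LB.step s.2 a s'.2) ∧ (aB a = false → s'.2 = s.2)

/-- All letters appearing in an execution satisfy the alphabet predicate. -/
private lemma exec_mem {α S : Type} {step : S → α → S → Prop} {p : α → Bool}
    (hp : ∀ s a s', step s a s' → p a = true) :
    ∀ {s w s'}, Exec step s w s' → ∀ a ∈ w, p a = true := by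
  intro s w s' h
  induction h with
  | nil => simp
  | cons hs _ ih =>
    intro a ha
    rcases List.mem_cons.1 ha with rfl | h
    · exact hp _ _ _ hs
    · exact ih a h

/-- Compose component executions into an execution of the binary parallel composition. -/
private lemma exec_par2_mk {α SA SB : Type} (aA aB : α → Bool) (LA : LTS α SA) (LB : LTS α SB) :
    ∀ (w : List α) {sa sb sa' sb'},
      Exec LA.step sa (w.filter aA) sa' → Exec LB.step sb (w.filter aB) sb' →
      Exec (par2 aA aB LA LB).step (sa, sb) w (sa', sb') := by
  intro w
  induction w with
  | nil =>
    intro sa sb sa' sb' ha hb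
    cases ha; cases hb
    exact .nil _
  | cons a w ih =>
    intro sa sb sa' sb' ha hb
    by_cases h1 : aA a = true
    · simp only [List.filter_cons, h1, if_pos] at ha
      cases ha with
      | cons hstepA htailA =>
        rename_i ma
        by_cases h2 : aB a = true
        · simp only [List.filter_cons, h2, if_pos] at hb
          cases hb with
          | cons hstepB htailB =>
            rename_i mb
            exact .cons ⟨fun _ => hstepA, fun hf => by simp [h1] at hf,
                fun _ => hstepB, fun hf => by simp [h2] at hf⟩ (ih htailA htailB)
        · simp only [Bool.not_eq_true] at h2
          simp only [List.filter_cons, h2] at hb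
          exact .cons (s' := (ma, sb)) ⟨fun _ => hstepA, fun hf => by simp [h1] at hf,
              fun hf => by simp [h2] at hf, fun _ => rfl⟩ (ih htailA hb)
    · simp only [Bool.not_eq_true] at h1
      simp only [List.filter_cons, h1] at ha
      by_cases h2 : aB a = true
      · simp only [List.filter_cons, h2, if_pos] at hb
        cases hb with
        | cons hstepB htailB =>
          rename_i mb
          exact .cons (s' := (sa, mb)) ⟨fun hf => by simp [h1] at hf, fun _ => rfl,
              fun _ => hstepB, fun hf => by simp [h2] at hf⟩ (ih ha htailB)
      · simp only [Bool.not_eq_true] at h2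
        simp only [List.filter_cons, h2] at hb
        exact .cons (s' := (sa, sb)) ⟨fun hf => by simp [h1] at hf, fun _ => rfl,
            fun hf => by simp [h2] at hf, fun _ => rfl⟩ (ih ha hb)

/-- Decompose an execution of the binary parallel composition into component executions. -/
private lemma exec_par2_proj {α SA SB : Type} {aA aB : α → Bool} {LA : LTS α SA} {LB : LTS α SB} :
    ∀ {s w s'}, Exec (par2 aA aB LA LB).step s w s' →
      Exec LA.step s.1 (w.filter aA) s'.1 ∧ Exec LB.step s.2 (w.filter aB) s'.2 := by
  intro s w s' h
  induction h with
  | nil => exact ⟨.nil _, .nil _⟩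
  | @cons s s' s'' a w hs he ih =>
    obtain ⟨h1, h2, h3, h4⟩ := hs
    constructor
    · by_cases hA : aA a = true
      · simpa [List.filter_cons, hA] using Exec.cons (h1 hA) ih.1
      · simp only [Bool.not_eq_true] at hA
        simp only [List.filter_cons, hA, Bool.false_eq_true, if_false]
        exact (h2 hA) ▸ ih.1
    · by_cases hB : aB a = true
      · simpa [List.filter_cons, hB] using Exec.cons (h3 hB) ih.2
      · simp only [Bool.not_eq_true] at hB
        simp only [List.filter_cons, hB, Bool.false_eq_true, if_false]
        exact (h4 hB) ▸ ih.2

/-- Removing letters outside the total alphabet preserves executions of `par`. -/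
private lemma exec_par_filter {α ι : Type} {S : ι → Type} {alph : ι → α → Bool}
    {A : ∀ i, LTS α (S i)} {aU : α → Bool}
    (hU : ∀ a, aU a = true ↔ ∃ j, alph j a = true) :
    ∀ {s w s'}, Exec (parStep alph A) s w s' → Exec (parStep alph A) s (w.filter aU) s' := by
  intro s w s' h
  induction h with
  | nil => exact .nil _
  | @cons s s' s'' a w hs he ih =>
    by_cases hA : aU a = true
    · simpa [List.filter_cons, hA] using Exec.cons hs ih
    · simp only [Bool.not_eq_true] at hA
      have hj : ∀ j, alph j a = false := by
        intro j
        by_contra hj'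
        simp only [Bool.not_eq_false] at hj'
        have := (hU a).2 ⟨j, hj'⟩
        simp [hA] at this
      have hss : s' = s := funext fun j => (hs j).2 (hj j)
      simpa [List.filter_cons, hA] using hss ▸ ih

/-- The universal one-state LTS over alphabet `p` can execute any word over `p`. -/
private lemma exec_univ {α : Type} (p : α → Bool) :
    ∀ w : List α, (∀ a ∈ w, p a = true) →
      Exec (fun (_ : Unit) a (_ : Unit) => p a = true) () w () := by
  intro w
  induction w with
  | nil => exact fun _ => .nil _
  | cons a w ih =>
    intro h
    exact .cons (h a (by simp)) (ih fun b hb => h b (by simp [hb]))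

/-- Merge two words with matching shared subsequences into a single interleaving. -/
private lemma merge_words {α : Type} (aE aU : α → Bool) :
    ∀ e u : List α, (∀ a ∈ e, aE a = true) → (∀ a ∈ u, aU a = true) →
      e.filter aU = u.filter aE → ∃ w : List α, w.filter aE = e ∧ w.filter aU = u := by
  intro e
  induction e with
  | nil =>
    intro u _ hu h
    exact ⟨u, by simpa using h.symm, List.filter_eq_self.2 hu⟩
  | cons a e' ih =>
    intro u
    induction u with
    | nil =>
      intro he _ h
      exact ⟨a :: e', List.filter_eq_self.2 he, by simpa using h⟩
    | cons b u' ihu =>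
      intro he hu h
      by_cases hA : aU a = true
      · by_cases hB : aE b = true
        · simp only [List.filter_cons, hA, hB, if_pos, List.cons.injEq] at h
          obtain ⟨hab, h⟩ := h
          subst hab
          obtain ⟨w, hw1, hw2⟩ := ih u' (fun c hc => he c (by simp [hc]))
            (fun c hc => hu c (by simp [hc])) h
          exact ⟨a :: w, by simp [List.filter_cons, he a (by simp), hw1],
            by simp [List.filter_cons, hA, hw2]⟩
        · simp only [Bool.not_eq_true] at hB
          obtain ⟨w, hw1, hw2⟩ := ihu he (fun c hc => hu c (by simp [hc]))
            (by simpa [List.filter_cons, hB] using h)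
          exact ⟨b :: w, by simp [List.filter_cons, hB, hw1],
            by simp [List.filter_cons, hu b (by simp), hw2]⟩
      · simp only [Bool.not_eq_true] at hA
        obtain ⟨w, hw1, hw2⟩ := ih (b :: u') (fun c hc => he c (by simp [hc])) hu
          (by simpa [List.filter_cons, hA] using h)
        exact ⟨a :: w, by simp [List.filter_cons, he a (by simp), hw1],
          by simp [List.filter_cons, hA, hw2]⟩

/-- for an LTS `Sld` over the interface alphabet `Σᵢ`, the
projections onto `Σ_E` of the trace languages of `E ∥ A` and `E ∥ Sld`
coincide for every environment `E` (an LTS whose alphabet meets the alphabet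
`⋃ⱼ Σⱼ` of `A` only inside `Σᵢ`) if and only if `Tr(Sld) = Tr(A)|_{Σᵢ}`. -/
theorem summary_iff_projection
    {α ι : Type} {S : ι → Type} (alph : ι → α → Bool) (A : ∀ i, LTS α (S i)) (i : ι)
    (hA : ∀ j s a s', (A j).step s a s' → alph j a = true)
    {SS : Type} (Sld : LTS α SS)
    (hS : ∀ s a s', Sld.step s a s' → alph i a = true)
    (aU : α → Bool) (hU : ∀ a, aU a = true ↔ ∃ j, alph j a = true) :
    (∀ (SE : Type) (aE : α → Bool) (Ev : LTS α SE),
        (∀ s a s', Ev.step s a s' → aE a = true) →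
        (∀ a, aE a = true → aU a = true → alph i a = true) →
        {w | ∃ w', (par2 aE aU Ev (par alph A)).Tr w' ∧ w'.filter aE = w} =
          {w | ∃ w', (par2 aE (alph i) Ev Sld).Tr w' ∧ w'.filter aE = w})
      ↔ {w | Sld.Tr w} = {w | ∃ w', (par alph A).Tr w' ∧ w'.filter (alph i) = w} := by
  have hiU : ∀ a, alph i a = true → aU a = true := fun a h => (hU a).2 ⟨i, h⟩
  -- filter by (alph i) after filter by aU is just filter by (alph i)
  have hfiU : ∀ l : List α, (l.filter aU).filter (alph i) = l.filter (alph i) := by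
    intro l
    rw [List.filter_filter]
    exact List.filter_congr fun a _ => by
      by_cases h : alph i a = true
      · simp [h, hiU a h]
      · simp only [Bool.not_eq_true] at h; simp [h]
  constructor
  · -- environments agree → summary condition
    intro hEnv
    have key := hEnv Unit (alph i) ⟨(), fun _ a _ => alph i a = true⟩
      (fun _ _ _ h => h) (fun a h _ => h)
    ext w
    constructor
    · rintro ⟨t, ht⟩
      have hall : ∀ a ∈ w, alph i a = true := exec_mem hS ht
      have hwfilt : w.filter (alph i) = w := List.filter_eq_self.2 hall
      have hmem : w ∈ {w | ∃ w', (par2 (alph i) (alph i)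
          (⟨(), fun _ a _ => alph i a = true⟩ : LTS α Unit) Sld).Tr w' ∧
          w'.filter (alph i) = w} := by
        refine ⟨w, ⟨((), t), exec_par2_mk _ _ _ _ w ?_ ?_⟩, hwfilt⟩
        · rw [hwfilt]; exact exec_univ (alph i) w hall
        · rw [hwfilt]; exact ht
      rw [← key] at hmem
      obtain ⟨w', ⟨s, hs⟩, hfilt⟩ := hmem
      obtain ⟨-, hA2⟩ := exec_par2_proj hs
      exact ⟨w'.filter aU, ⟨s.2, hA2⟩, by rw [hfiU, hfilt]⟩
    · rintro ⟨u, ⟨s, hsu⟩, hfilt⟩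
      have hmem : w ∈ {w | ∃ w', (par2 (alph i) aU
          (⟨(), fun _ a _ => alph i a = true⟩ : LTS α Unit) (par alph A)).Tr w' ∧
          w'.filter (alph i) = w} := by
        refine ⟨u, ⟨((), s), exec_par2_mk _ _ _ _ u ?_ ?_⟩, hfilt⟩
        · exact exec_univ (alph i) _ fun a ha => (List.mem_filter.1 ha).2
        · exact exec_par_filter hU hsu
      rw [key] at hmem
      obtain ⟨w', ⟨s', hs'⟩, hfilt'⟩ := hmem
      exact ⟨s'.2, hfilt' ▸ (exec_par2_proj hs').2⟩
  · -- summary condition → environments agree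
    intro hTr SE aE Ev hE1 hE2
    ext w
    constructor
    · rintro ⟨w', ⟨s, hs⟩, hfilt⟩
      obtain ⟨hEv, hAv⟩ := exec_par2_proj hs
      -- the Σᵢ-projection of w' is a trace of Sld
      have hproj : Sld.Tr (w'.filter (alph i)) := by
        have : w'.filter (alph i) ∈ {w | ∃ u, (par alph A).Tr u ∧ u.filter (alph i) = w} :=
          ⟨w'.filter aU, ⟨s.2, hAv⟩, hfiU w'⟩
        rw [← hTr] at this
        exact this
      obtain ⟨t, ht⟩ := hproj
      exact ⟨w', ⟨(s.1, t), exec_par2_mk _ _ _ _ w' hEv ht⟩, hfilt⟩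
    · rintro ⟨w', ⟨s, hs⟩, hfilt⟩
      obtain ⟨hEv, hSv⟩ := exec_par2_proj hs
      have hproj : w'.filter (alph i) ∈
          {w | ∃ u, (par alph A).Tr u ∧ u.filter (alph i) = w} := by
        rw [← hTr]; exact ⟨s.2, hSv⟩
      obtain ⟨u, ⟨t, htu⟩, hfu⟩ := hproj
      have htu₀ : Exec (parStep alph A) (fun j => (A j).init) (u.filter aU) t :=
        exec_par_filter hU htu
      have hu₀mem : ∀ a ∈ u.filter aU, aU a = true := fun a ha => (List.mem_filter.1 ha).2
      have hemem : ∀ a ∈ w'.filter aE, aE a = true := fun a ha => (List.mem_filter.1 ha).2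
      have key_pt : ∀ a, (aE a && aU a) = (aE a && alph i a) := fun a => by
        by_cases h1 : aE a = true
        · by_cases h2 : aU a = true
          · simp [h1, h2, hE2 a h1 h2]
          · simp only [Bool.not_eq_true] at h2
            by_cases h3 : alph i a = true
            · exact absurd (hiU a h3) (by simp [h2])
            · simp only [Bool.not_eq_true] at h3
              simp [h2, h3]
        · simp only [Bool.not_eq_true] at h1
          simp [h1]
      have hshared : (w'.filter aE).filter aU = (u.filter aU).filter aE := by
        rw [List.filter_filter, List.filter_filter]
        calc List.filter (fun a => aU a && aE a) w'
            = List.filter (fun a => aE a && alph i a) w' :=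
              List.filter_congr fun a _ => by rw [Bool.and_comm]; exact key_pt a
          _ = (w'.filter (alph i)).filter aE := List.filter_filter.symm
          _ = (u.filter (alph i)).filter aE := by rw [hfu]
          _ = List.filter (fun a => aE a && alph i a) u := List.filter_filter
          _ = List.filter (fun a => aE a && aU a) u :=
              List.filter_congr fun a _ => (key_pt a).symm
      obtain ⟨w'', hw1, hw2⟩ :=
        merge_words aE aU (w'.filter aE) (u.filter aU) hemem hu₀mem hshared
      refine ⟨w'', ⟨(s.1, t), exec_par2_mk _ _ _ _ w'' ?_ ?_⟩, by rw [hw1, hfilt]⟩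
      · rw [hw1]; exact hEv
      · rw [hw2]; exact htu₀
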